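/- Let O = (1−θ) m η (1−ρ) d₁ d₂ / ((1−θd₂)(1−ρd₂)). If O < 1, then the limit as N → ∞ of the expected shares ⟨y,ρ⟩ (given by the closed-form fixed point S_N = (1−θ)mηK_N/(1−(1−θ)mηK_N) with K_N the truncated double geometric sum) equals O/(1−O). -/

import Mathlib

open Finset Filter

/-- With O = (1−θ)mη(1−ρ)d₁d₂/((1−θd₂)(1−ρd₂)) < 1, the
expected shares S_N = (1−θ)mηK_N/(1−(1−θ)mηK_N) converge to O/(1−O) as
N → ∞, where K_N is the truncated double geometric sum. -/
theorem stmt10 (θ m η ρ d₁ d₂ : ℝ)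
    (hθ0 : 0 < θ) (hθ1 : θ < 1) (hm : 0 < m) (hη : 0 < η)
    (hρ0 : 0 < ρ) (hρ1 : ρ < 1) (hd₁ : 0 < d₁) (hd₂0 : 0 < d₂) (hd₂1 : d₂ < 1)
    (ρt : ℝ) (hρt : ρt = (1 - ρ) / ρ)
    (ρl r : ℕ → ℝ) (hρl : ∀ l, ρl l = ρt * ρ ^ l) (hr : ∀ l, r l = d₁ * d₂ ^ l)
    (K : ℕ → ℝ)
    (hK : ∀ N, K N = ∑ l ∈ Icc 1 N, ρl l *
      (∑ i ∈ range (N - l + 1), θ ^ (N - l - i) * r (N - i)))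
    (O : ℝ)
    (hO : O = (1 - θ) * m * η * (1 - ρ) * d₁ * d₂ / ((1 - θ * d₂) * (1 - ρ * d₂)))
    (hO1 : O < 1)
    (S : ℕ → ℝ)
    (hS : ∀ N, S N = (1 - θ) * m * η * K N / (1 - (1 - θ) * m * η * K N)) :
    Tendsto S atTop (nhds (O / (1 - O))) := by
  set a : ℝ := ρ * d₂ with ha_def
  set b : ℝ := θ * d₂ with hb_def
  have ha0 : 0 < a := mul_pos hρ0 hd₂0
  have ha1 : a < 1 := by nlinarith
  have hb0 : 0 < b := mul_pos hθ0 hd₂0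
  have hb1 : b < 1 := by nlinarith
  have hb_ne : b ≠ 1 := ne_of_lt hb1
  have h1b : (1 : ℝ) - b ≠ 0 := by linarith
  have h1a : (1 : ℝ) - a ≠ 0 := by linarith
  set C : ℝ := ρt * d₁ / (1 - b) with hC_def
  -- inner sum closed form
  have hinner : ∀ N l : ℕ, 1 ≤ l → l ≤ N →
      (∑ i ∈ range (N - l + 1), θ ^ (N - l - i) * r (N - i))
        = d₁ * d₂ ^ l * ((b ^ (N - l + 1) - 1) / (b - 1)) := by
    intro N l hl1 hlN
    rw [← geom_sum_eq hb_ne, Finset.mul_sum, ← Finset.sum_range_reflect]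
    apply Finset.sum_congr rfl
    intro i hi
    rw [Finset.mem_range] at hi
    rw [hr]
    have h1 : N - l + 1 - 1 - i = N - l - i := by omega
    rw [h1]
    have e1 : N - l - (N - l - i) = i := by omega
    have e2 : N - (N - l - i) = l + i := by omega
    rw [e1, e2, pow_add, hb_def, mul_pow]
    ring
  -- closed form for K
  have hK2 : ∀ N, K N = C * ((∑ l ∈ Icc 1 N, a ^ l)
      - ∑ l ∈ Icc 1 N, a ^ l * b ^ (N - l + 1)) := by
    intro N
    rw [hK, ← Finset.sum_sub_distrib, Finset.mul_sum]
    apply Finset.sum_congr rfl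
    intro l hl
    rw [Finset.mem_Icc] at hl
    rw [hρl, hinner N l hl.1 hl.2, hC_def]
    have haa : a ^ l = ρ ^ l * d₂ ^ l := by rw [ha_def, mul_pow]
    rw [haa]
    have hb1' : b - 1 ≠ 0 := sub_ne_zero.mpr hb_ne
    field_simp
    ring
  -- limit of first sum
  have hS1 : Tendsto (fun N => ∑ l ∈ Icc 1 N, a ^ l) atTop (nhds (a / (1 - a))) := by
    have h : ∀ N, ∑ l ∈ Icc 1 N, a ^ l = a * ∑ i ∈ range N, a ^ i := by
      intro N
      rw [← Finset.Ico_add_one_right_eq_Icc, Finset.sum_Ico_eq_sum_range, Finset.mul_sum]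
      simp [pow_add]
    simp only [h]
    have := (hasSum_geometric_of_lt_one ha0.le ha1).tendsto_sum_nat
    have h2 := this.const_mul a
    rw [div_eq_mul_inv]
    exact h2
  -- limit of second sum
  have hS2 : Tendsto (fun N => ∑ l ∈ Icc 1 N, a ^ l * b ^ (N - l + 1)) atTop (nhds 0) := by
    set c : ℝ := max a b with hc_def
    have hc0 : 0 < c := lt_max_of_lt_left ha0
    have hc1 : c < 1 := max_lt ha1 hb1
    have hbound : ∀ N : ℕ, ∑ l ∈ Icc 1 N, a ^ l * b ^ (N - l + 1) ≤ (N : ℝ) * c ^ (N + 1) := by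
      intro N
      calc ∑ l ∈ Icc 1 N, a ^ l * b ^ (N - l + 1)
          ≤ ∑ l ∈ Icc 1 N, c ^ (N + 1) := by
            apply Finset.sum_le_sum
            intro l hl
            rw [Finset.mem_Icc] at hl
            have e : l + (N - l + 1) = N + 1 := by omega
            calc a ^ l * b ^ (N - l + 1)
                ≤ c ^ l * c ^ (N - l + 1) := by
                  apply mul_le_mul (pow_le_pow_left₀ ha0.le (le_max_left a b) l)
                    (pow_le_pow_left₀ hb0.le (le_max_right a b) _)
                    (pow_nonneg hb0.le _) (pow_nonneg hc0.le _)
              _ = c ^ (N + 1) := by rw [← pow_add, e]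
        _ = (N : ℝ) * c ^ (N + 1) := by
            rw [Finset.sum_const, Nat.card_Icc]
            simp
    have hlow : ∀ N : ℕ, 0 ≤ ∑ l ∈ Icc 1 N, a ^ l * b ^ (N - l + 1) := by
      intro N
      apply Finset.sum_nonneg
      intro l _
      positivity
    have htop : Tendsto (fun N : ℕ => (N : ℝ) * c ^ (N + 1)) atTop (nhds 0) := by
      have hsum : Summable (fun n : ℕ => (n : ℝ) ^ 1 * c ^ n) := by
        apply summable_pow_mul_geometric_of_norm_lt_one
        rw [Real.norm_eq_abs, abs_of_pos hc0]; exact hc1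
      have := (hsum.tendsto_atTop_zero).const_mul c
      rw [mul_zero] at this
      convert this using 2 with N
      rw [pow_succ]
      ring
    exact squeeze_zero hlow hbound htop
  -- limit of K
  have hKlim : Tendsto K atTop (nhds (C * (a / (1 - a)))) := by
    have h := ((hS1.sub hS2).const_mul C)
    rw [sub_zero] at h
    exact h.congr (fun N => (hK2 N).symm)
  -- u N := (1-θ)mη K N → O
  have hOeq : (1 - θ) * m * η * (C * (a / (1 - a))) = O := by
    rw [hO, hC_def, hρt, ha_def, hb_def]
    field_simp
  have hu : Tendsto (fun N => (1 - θ) * m * η * K N) atTop (nhds O) := by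
    rw [← hOeq]
    exact hKlim.const_mul _
  have h1O : (1 : ℝ) - O ≠ 0 := by linarith
  have hdiv := hu.div ((tendsto_const_nhds.sub hu)) h1O
  have hSeq : S = fun N => (1 - θ) * m * η * K N / (1 - (1 - θ) * m * η * K N) :=
    funext hS
  rw [hSeq]
  exact hdiv
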